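/- Let α ≥ 1. For each α, the equation (m+1)^{2α}(m+1) − ((2α+1)m + 1) = 0 has a unique nonzero real solution m in the interval [−3, −2), and m = −3 when α = 1. -/

import Mathlib

open Set

/-- for `α ≥ 1`, the equation `(m+1)^{2α}(m+1) − ((2α+1)m + 1) = 0` has a unique
nonzero solution `m ∈ [−3, −2)`, and `m = −3` when `α = 1`.  Here `(m+1)^{2α} = ((m+1)²)^α`. -/
theorem stmt_9 (α : ℝ) (hα : 1 ≤ α) :
    (∃! m : ℝ, m ∈ Ico (-3 : ℝ) (-2) ∧ m ≠ 0 ∧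
      ((m + 1) ^ 2) ^ α * (m + 1) - ((2 * α + 1) * m + 1) = 0) ∧
    (α = 1 → ∀ m : ℝ, m ∈ Ico (-3 : ℝ) (-2) → m ≠ 0 →
      ((m + 1) ^ 2) ^ α * (m + 1) - ((2 * α + 1) * m + 1) = 0 → m = -3) := by
  set p : ℝ := 2 * α + 1 with hp
  have hp1 : (1 : ℝ) < p := by rw [hp]; linarith
  set g : ℝ → ℝ := fun s => s ^ p - (p * s + 2 * α) with hg
  -- key rewrite: for m < -1, f m = -(g (-(m+1)))
  have key : ∀ m : ℝ, m < -1 →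
      ((m + 1) ^ 2) ^ α * (m + 1) - ((2 * α + 1) * m + 1) = -(g (-(m + 1))) := by
    intro m hm
    have hs : 0 < -(m + 1) := by linarith
    have h1 : ((m + 1) ^ 2 : ℝ) = (-(m + 1)) ^ (2 : ℕ) := by ring
    have h2 : ((-(m + 1)) ^ (2 : ℕ) : ℝ) ^ α = (-(m + 1)) ^ (2 * α) := by
      rw [← Real.rpow_natCast (-(m + 1)) 2, ← Real.rpow_mul hs.le]
      norm_num
    have h3 : (-(m + 1)) ^ (2 * α) * (m + 1) = -((-(m + 1)) ^ p) := by
      rw [hp, Real.rpow_add_one (ne_of_gt hs)]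
      ring
    rw [h1, h2, h3]
    simp only [hg]
    ring
  -- differentiability
  have hderivAt : ∀ x : ℝ, 0 < x →
      HasDerivAt g (p * x ^ (p - 1) - p) x := by
    intro x hx
    have h1 : HasDerivAt (fun s : ℝ => s ^ p) (p * x ^ (p - 1)) x :=
      Real.hasDerivAt_rpow_const (Or.inl (ne_of_gt hx))
    have h2 : HasDerivAt (fun s : ℝ => p * s + 2 * α) p x := by
      simpa using ((hasDerivAt_id x).const_mul p).add_const (2 * α)
    exact h1.sub h2
  have hcont : ContinuousOn g (Icc 1 2) := fun x hx =>
    ((hderivAt x (by linarith [hx.1])).continuousAt).continuousWithinAt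
  have hmono : StrictMonoOn g (Icc 1 2) := by
    apply strictMonoOn_of_deriv_pos (convex_Icc 1 2) hcont
    intro x hx
    rw [interior_Icc] at hx
    rw [(hderivAt x (by linarith [hx.1])).deriv]
    have hxp : 1 < x ^ (p - 1) := by
      rw [Real.one_lt_rpow_iff_of_pos (by linarith [hx.1])]
      exact Or.inl ⟨hx.1, by linarith⟩
    nlinarith
  -- endpoint values
  have hg1 : g 1 < 0 := by
    simp only [hg, Real.one_rpow]
    nlinarith
  have h2p : (2 : ℝ) ^ p = 2 * (1 + 3 : ℝ) ^ α := by
    rw [hp, Real.rpow_add (by norm_num), Real.rpow_one, Real.rpow_mul (by norm_num : (0:ℝ) ≤ 2)]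
    norm_num
    ring
  have hbern : 1 + α * 3 ≤ (1 + 3 : ℝ) ^ α :=
    one_add_mul_self_le_rpow_one_add (by norm_num) hα
  have hg2 : 0 ≤ g 2 := by
    simp only [hg, h2p]
    nlinarith
  -- existence
  have hEx : ∃ s ∈ Ioc (1:ℝ) 2, g s = 0 := by
    have := intermediate_value_Ioc (by norm_num : (1:ℝ) ≤ 2) hcont
    have h0 : (0:ℝ) ∈ Ioc (g 1) (g 2) := ⟨hg1, hg2⟩
    obtain ⟨s, hs, hgs⟩ := this h0
    exact ⟨s, hs, hgs⟩
  obtain ⟨s₀, hs₀, hgs₀⟩ := hEx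
  have hmem : ∀ s ∈ Ioc (1:ℝ) 2, s ∈ Icc (1:ℝ) 2 := fun s hs => ⟨hs.1.le, hs.2⟩
  -- translation m ↔ s
  have hms : ∀ m : ℝ, m ∈ Ico (-3:ℝ) (-2) → (-(m+1)) ∈ Ioc (1:ℝ) 2 := by
    intro m hm; exact ⟨by linarith [hm.2], by linarith [hm.1]⟩
  constructor
  · refine ⟨-1 - s₀, ⟨⟨by linarith [hs₀.2], by linarith [hs₀.1]⟩, by
      have := hs₀.1; intro h; nlinarith, ?_⟩, ?_⟩
    · rw [key _ (by linarith [hs₀.1])]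
      have : -(-1 - s₀ + 1) = s₀ := by ring
      rw [this, hgs₀]; ring
    · rintro m ⟨hm, -, hfm⟩
      rw [key _ (by linarith [hm.2])] at hfm
      have hroot : g (-(m+1)) = 0 := by linarith
      have heq : -(m+1) = s₀ :=
        hmono.injOn (hmem _ (hms m hm)) (hmem _ hs₀) (by rw [hroot, hgs₀])
      linarith
  · intro hα1 m hm _hm0 hfm
    rw [key _ (by linarith [hm.2])] at hfm
    have hroot : g (-(m+1)) = 0 := by linarith
    have hg2' : g 2 = 0 := by
      simp only [hg, h2p, hp, hα1]
      norm_num [Real.rpow_one]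
    have heq : -(m+1) = 2 :=
      hmono.injOn (hmem _ (hms m hm)) (by norm_num) (by rw [hroot, hg2'])
    linarith
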